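/- A Gaussian distribution with positive definite precision matrix Θ that is an M-matrix has all partial correlation coefficients nonnegative: ρ_{ij|S} ≥ 0 for all distinct i,j and all S ⊆ [p]\{i,j}. -/

import Mathlib

open Matrix

lemma posDef_submatrix_of_injective {m n : Type*} [Fintype m] [Fintype n]
    {Θ : Matrix n n ℝ} (hpd : Θ.PosDef) {f : m → n} (hf : Function.Injective f) :
    (Θ.submatrix f f).PosDef := by
  classical
  rw [Matrix.posDef_iff_dotProduct_mulVec]
  constructor
  · ext a b
    have := congrFun (congrFun hpd.1 (f a)) (f b)
    simpa [Matrix.conjTranspose_apply] using this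
  · intro x hx
    set y : n → ℝ := fun k => if h : ∃ a, f a = k then x h.choose else 0 with hydef
    have hyf : ∀ a, y (f a) = x a := by
      intro a
      have h : ∃ b, f b = f a := ⟨a, rfl⟩
      have : f h.choose = f a := h.choose_spec
      simp [hydef, dif_pos h, hf this]
    have key : ∀ g : n → ℝ, (∑ k, y k * g k) = ∑ a, x a * g (f a) := by
      intro g
      rw [show (∑ k, y k * g k) = ∑ k ∈ Finset.univ.image f, y k * g k from
        (Finset.sum_subset (Finset.subset_univ _) ?_).symm]
      · rw [Finset.sum_image (fun a _ b _ h => hf h)]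
        exact Finset.sum_congr rfl fun a _ => by rw [hyf]
      · intro k _ hk
        have : ¬ ∃ a, f a = k := by
          rintro ⟨a, rfl⟩
          exact hk (Finset.mem_image_of_mem f (Finset.mem_univ a))
        simp [hydef, dif_neg this]
    have hy : y ≠ 0 := by
      intro h
      apply hx
      funext a
      have := congrFun h (f a)
      rw [hyf] at this
      simpa using this
    have hpos := hpd.dotProduct_mulVec_pos hy
    rw [show star y = y from star_trivial y] at hpos
    have heq : y ⬝ᵥ Θ *ᵥ y = x ⬝ᵥ (Θ.submatrix f f) *ᵥ x := by
      unfold dotProduct mulVec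
      rw [key]
      refine Finset.sum_congr rfl fun a _ => ?_
      congr 1
      unfold dotProduct
      calc (∑ l, Θ (f a) l * y l) = ∑ l, y l * Θ (f a) l := by
            exact Finset.sum_congr rfl fun l _ => mul_comm _ _
        _ = ∑ b, x b * Θ (f a) (f b) := key _
        _ = ∑ b, Θ.submatrix f f a b * x b :=
            Finset.sum_congr rfl fun b _ => mul_comm _ _
    have := heq ▸ hpos
    rwa [show star x = x from star_trivial x]
open Matrix

lemma inv_entry_nonneg {n : Type*} [Fintype n] [DecidableEq n]
    {Θ : Matrix n n ℝ} (hpd : Θ.PosDef) (hZ : ∀ i j, i ≠ j → Θ i j ≤ 0)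
    (k l : n) : 0 ≤ Θ⁻¹ k l := by
  classical
  set x : n → ℝ := fun a => Θ⁻¹ a l with hxdef
  have hmul : Θ * Θ⁻¹ = 1 := mul_nonsing_inv _ (isUnit_iff_isUnit_det _ |>.1 hpd.isUnit)
  have hx : Θ *ᵥ x = Pi.single l 1 := by
    have : Θ *ᵥ (Θ⁻¹ *ᵥ Pi.single l 1) = Pi.single l 1 := by
      rw [mulVec_mulVec, hmul, one_mulVec]
    rw [show Θ⁻¹ *ᵥ Pi.single l 1 = x by
      funext a
      rw [mulVec_single, hxdef]; simp] at this
    exact this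
  set u : n → ℝ := fun a => max (x a) 0 with hudef
  set v : n → ℝ := fun a => max (-(x a)) 0 with hvdef
  have hu0 : ∀ a, 0 ≤ u a := fun a => le_max_right _ _
  have hv0 : ∀ a, 0 ≤ v a := fun a => le_max_right _ _
  have huv : ∀ a, u a * v a = 0 := by
    intro a
    rcases le_or_gt (x a) 0 with h | h
    · have : u a = 0 := max_eq_right h
      rw [this, zero_mul]
    · have : v a = 0 := max_eq_right (by linarith)
      rw [this, mul_zero]
  have hsub : u - v = x := by
    funext a
    simp only [Pi.sub_apply, hudef, hvdef]
    rcases le_or_gt (x a) 0 with h | h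
    · rw [max_eq_right h, max_eq_left (by linarith)]; ring
    · rw [max_eq_left h.le, max_eq_right (by linarith)]; ring
  have hveq : v = 0 := by
    by_contra hv
    have hpos := hpd.dotProduct_mulVec_pos hv
    rw [show star v = v from star_trivial v] at hpos
    have h1 : v ⬝ᵥ Θ *ᵥ x = v l := by
      rw [hx, dotProduct_single, mul_one]
    have h2 : v ⬝ᵥ Θ *ᵥ u ≤ 0 := by
      unfold dotProduct mulVec
      have : ∀ a, v a * (∑ b, Θ a b * u b) = ∑ b, v a * (Θ a b * u b) := fun a =>
        Finset.mul_sum _ _ _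
      calc (∑ a, v a * ∑ b, Θ a b * u b) = ∑ a, ∑ b, v a * (Θ a b * u b) :=
            Finset.sum_congr rfl fun a _ => this a
        _ ≤ 0 := by
            apply Finset.sum_nonpos
            intro a _
            apply Finset.sum_nonpos
            intro b _
            rcases eq_or_ne a b with rfl | hab
            · have : v a * (Θ a a * u a) = Θ a a * (u a * v a) := by ring
              rw [this, huv, mul_zero]
            · have h3 : Θ a b ≤ 0 := hZ a b hab
              have := mul_nonneg (hv0 a) (hu0 b)
              nlinarith
    have h4 : v ⬝ᵥ Θ *ᵥ v = v ⬝ᵥ Θ *ᵥ u - v ⬝ᵥ Θ *ᵥ x := by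
      rw [← hsub, mulVec_sub, dotProduct_sub]
      ring
    have h5 : 0 ≤ v l := hv0 l
    rw [h4, h1] at hpos
    linarith
  have : v k = 0 := by rw [hveq]; rfl
  have : max (-(x k)) 0 = 0 := this
  have hxk : 0 ≤ x k := by
    by_contra h
    push_neg at h
    rw [max_eq_left (by linarith)] at this
    linarith
  exact hxk
open Matrix

lemma key_entry_nonpos {p : ℕ} {Θ : Matrix (Fin p) (Fin p) ℝ} (hpd : Θ.PosDef)
    (hZ : ∀ i j : Fin p, i ≠ j → Θ i j ≤ 0) (M : Finset (Fin p))
    (i j : ↥M) (hij : (i : Fin p) ≠ (j : Fin p)) :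
    ((Matrix.of fun a b : ↥M => Θ⁻¹ a.1 b.1)⁻¹) i j ≤ 0 := by
  classical
  set e : {x : Fin p // x ∈ M} ⊕ {x : Fin p // ¬ x ∈ M} ≃ Fin p :=
    Equiv.sumCompl (· ∈ M) with hedef
  set A : Matrix ↥M ↥M ℝ := Matrix.of fun a b => Θ a.1 b.1 with hA
  set B : Matrix ↥M {x : Fin p // ¬ x ∈ M} ℝ := Matrix.of fun a b => Θ a.1 b.1 with hB
  set C : Matrix {x : Fin p // ¬ x ∈ M} ↥M ℝ := Matrix.of fun a b => Θ a.1 b.1 with hC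
  set D : Matrix {x : Fin p // ¬ x ∈ M} {x : Fin p // ¬ x ∈ M} ℝ :=
    Matrix.of fun a b => Θ a.1 b.1 with hD
  set P : Matrix ↥M ↥M ℝ := Matrix.of fun a b => Θ⁻¹ a.1 b.1 with hP
  set Q : Matrix ↥M {x : Fin p // ¬ x ∈ M} ℝ := Matrix.of fun a b => Θ⁻¹ a.1 b.1 with hQ
  set R : Matrix {x : Fin p // ¬ x ∈ M} ↥M ℝ := Matrix.of fun a b => Θ⁻¹ a.1 b.1 with hR
  set S : Matrix {x : Fin p // ¬ x ∈ M} {x : Fin p // ¬ x ∈ M} ℝ :=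
    Matrix.of fun a b => Θ⁻¹ a.1 b.1 with hS
  have hΘ' : Θ.submatrix e e = fromBlocks A B C D := by
    ext a b
    cases a <;> cases b <;> simp [hedef, hA, hB, hC, hD, Matrix.submatrix_apply]
  have hSig : Θ⁻¹.submatrix e e = fromBlocks P Q R S := by
    ext a b
    cases a <;> cases b <;> simp [hedef, hP, hQ, hR, hS, Matrix.submatrix_apply]
  have hmul0 : Θ * Θ⁻¹ = 1 := mul_nonsing_inv _ (isUnit_iff_isUnit_det _ |>.1 hpd.isUnit)
  have hmul : fromBlocks A B C D * fromBlocks P Q R S = 1 := by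
    rw [← hΘ', ← hSig, submatrix_mul_equiv, hmul0, submatrix_one_equiv]
  rw [fromBlocks_multiply, ← fromBlocks_one] at hmul
  have h11 : A * P + B * R = 1 := by
    have := congrArg Matrix.toBlocks₁₁ hmul
    simpa only [Matrix.toBlocks_fromBlocks₁₁] using this
  have h21 : C * P + D * R = 0 := by
    have := congrArg Matrix.toBlocks₂₁ hmul
    simpa only [Matrix.toBlocks_fromBlocks₂₁] using this
  have hDpd : D.PosDef := posDef_submatrix_of_injective hpd Subtype.val_injective
  have hDinv : D⁻¹ * D = 1 := nonsing_inv_mul _ (isUnit_iff_isUnit_det _ |>.1 hDpd.isUnit)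
  have hRform : R = -(D⁻¹ * C * P) := by
    have h := congrArg (fun X => D⁻¹ * X) h21
    simp only [Matrix.mul_add, Matrix.mul_zero, ← Matrix.mul_assoc, hDinv,
      Matrix.one_mul] at h
    exact eq_neg_of_add_eq_zero_right h
  have hNP : (A - B * D⁻¹ * C) * P = 1 := by
    rw [← h11, hRform]
    simp only [Matrix.sub_mul, Matrix.mul_neg, Matrix.neg_mul, Matrix.add_mul,
      Matrix.mul_assoc, sub_eq_add_neg]
  have hPinv : P⁻¹ = A - B * D⁻¹ * C := inv_eq_left_inv hNP
  have hgoal : ((Matrix.of fun a b : ↥M => Θ⁻¹ a.1 b.1)⁻¹) i j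
      = A i j - (B * D⁻¹ * C) i j := by
    rw [← hP, hPinv]; rfl
  rw [hgoal]
  have hAij : A i j ≤ 0 := hZ _ _ hij
  have hBDC : 0 ≤ (B * D⁻¹ * C) i j := by
    rw [Matrix.mul_assoc, Matrix.mul_apply]
    apply Finset.sum_nonneg
    intro k _
    rw [Matrix.mul_apply]
    have hB0 : B i k ≤ 0 := hZ _ _ (fun h => k.2 (h ▸ i.2))
    have hsum : (∑ l, D⁻¹ k l * C l j) ≤ 0 := by
      apply Finset.sum_nonpos
      intro l _
      have hC0 : C l j ≤ 0 := hZ _ _ (fun h => l.2 (h ▸ j.2))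
      have hDi : 0 ≤ D⁻¹ k l := by
        apply inv_entry_nonneg hDpd
        intro a b hab
        exact hZ a.1 b.1 (fun h => hab (Subtype.ext h))
      exact mul_nonpos_iff.2 (Or.inl ⟨hDi, hC0⟩)
    nlinarith
  linarith



/-- Partial correlation coefficient computed from the covariance matrix `Sg` via the
inverse of the principal submatrix on `M = S ∪ {i,j}`. -/
noncomputable def partialCorr {p : ℕ} (Sg : Matrix (Fin p) (Fin p) ℝ)
    (i j : Fin p) (S : Finset (Fin p)) : ℝ :=
  let A := (Matrix.of fun a b : ↥(insert i (insert j S)) => Sg a.1 b.1)⁻¹;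
  -(A ⟨i, Finset.mem_insert_self i _⟩
      ⟨j, Finset.mem_insert_of_mem (Finset.mem_insert_self j S)⟩) /
    Real.sqrt (A ⟨i, Finset.mem_insert_self i _⟩ ⟨i, Finset.mem_insert_self i _⟩ *
      A ⟨j, Finset.mem_insert_of_mem (Finset.mem_insert_self j S)⟩
        ⟨j, Finset.mem_insert_of_mem (Finset.mem_insert_self j S)⟩)

/-- A Gaussian distribution whose precision matrix `Θ` is a symmetric positive definite
M-matrix has all partial correlation coefficients nonnegative: `ρ_{ij|S} ≥ 0` for all
distinct `i, j` and all `S ⊆ [p] \ {i,j}`. -/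
theorem stmt3 {p : ℕ} (Θ : Matrix (Fin p) (Fin p) ℝ)
    (hpd : Θ.PosDef) (hsym : Θ.IsSymm)
    (hM : ∀ i j : Fin p, i ≠ j → Θ i j ≤ 0)
    (Sg : Matrix (Fin p) (Fin p) ℝ) (hSg : Sg = Θ⁻¹) :
    ∀ (i j : Fin p), i ≠ j → ∀ S : Finset (Fin p), i ∉ S → j ∉ S →
      0 ≤ partialCorr Sg i j S := by
  intro i j hij S hiS hjS
  unfold partialCorr
  simp only
  apply div_nonneg _ (Real.sqrt_nonneg _)
  rw [neg_nonneg, hSg]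
  exact key_entry_nonpos hpd hM (insert i (insert j S))
    ⟨i, Finset.mem_insert_self i _⟩
    ⟨j, Finset.mem_insert_of_mem (Finset.mem_insert_self j S)⟩ hij
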